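/- Let q = 2^r with q ≥ 8. If a ∈ F_q satisfies tr(aβ) = 0 for every β ∈ F_q* with tr(β⁻¹) = 0, then a = 0. (Equivalently: the statement fails only for q ∈ {2,4}; the proof uses that q−2 > 2√q − 1 for q ≥ 8 combined with the Weil bound |K(λ;a)| ≤ 2√q.) -/

import Mathlib

open Finset
open scoped Classical

noncomputable instance (p n : ℕ) [Fact p.Prime] : Fintype (GaloisField p n) :=
  Fintype.ofFinite _

theorem stmt12 (r : ℕ) (hr : 3 ≤ r) (a : GaloisField 2 r)
    (h : ∀ β : GaloisField 2 r, β ≠ 0 →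
      Algebra.trace (ZMod 2) (GaloisField 2 r) β⁻¹ = 0 →
        Algebra.trace (ZMod 2) (GaloisField 2 r) (a * β) = 0) :
    a = 0 := by
  by_contra ha
  set tr := Algebra.trace (ZMod 2) (GaloisField 2 r) with htrdef
  have z2 : ∀ x y : ZMod 2, (x = 0 ↔ y = 0) → x = y := by decide
  have zadd : ∀ x : ZMod 2, x + x = 0 := by decide
  have hadd : ∀ x : GaloisField 2 r, x + x = 0 := CharTwo.add_self_eq_zero
  -- the three finsets
  let T : Finset (GaloisField 2 r) := univ.filter (fun x => x ≠ 0 ∧ tr x = 0)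
  let S : Finset (GaloisField 2 r) := univ.filter (fun β => β ≠ 0 ∧ tr β⁻¹ = 0)
  let H : Finset (GaloisField 2 r) := univ.filter (fun β => β ≠ 0 ∧ tr (a * β) = 0)
  have hST : S.card = T.card := by
    apply Finset.card_bij (fun β _ => β⁻¹)
    · intro β hβ
      simp only [S, T, Finset.mem_filter, Finset.mem_univ, true_and] at *
      exact ⟨inv_ne_zero hβ.1, hβ.2⟩
    · intro β₁ h₁ β₂ h₂ hinv
      exact inv_injective hinv
    · intro x hx
      simp only [T, Finset.mem_filter, Finset.mem_univ, true_and] at hx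
      refine ⟨x⁻¹, ?_, inv_inv x⟩
      simp only [S, Finset.mem_filter, Finset.mem_univ, true_and, inv_inv]
      exact ⟨inv_ne_zero hx.1, hx.2⟩
  have hHT : H.card = T.card := by
    apply Finset.card_bij (fun β _ => a * β)
    · intro β hβ
      simp only [H, T, Finset.mem_filter, Finset.mem_univ, true_and] at *
      exact ⟨mul_ne_zero ha hβ.1, hβ.2⟩
    · intro β₁ h₁ β₂ h₂ heq
      exact mul_left_cancel₀ ha heq
    · intro x hx
      simp only [T, Finset.mem_filter, Finset.mem_univ, true_and] at hx
      refine ⟨a⁻¹ * x, ?_, mul_inv_cancel_left₀ ha x⟩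
      simp only [H, Finset.mem_filter, Finset.mem_univ, true_and]
      constructor
      · exact mul_ne_zero (inv_ne_zero ha) hx.1
      · rw [mul_inv_cancel_left₀ ha x]
        exact hx.2
  have hSH : S ⊆ H := by
    intro β hβ
    simp only [S, Finset.mem_filter, Finset.mem_univ, true_and] at hβ
    simp only [H, Finset.mem_filter, Finset.mem_univ, true_and]
    exact ⟨hβ.1, h β hβ.1 hβ.2⟩
  have hSeq : S = H := Finset.eq_of_subset_of_card_le hSH (by rw [hST, hHT])
  -- key equality of traces
  have key : ∀ β : GaloisField 2 r, β ≠ 0 → tr (a * β) = tr β⁻¹ := by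
    intro β hβ
    apply z2
    constructor
    · intro h0
      have hmem : β ∈ H := by
        simp only [H, Finset.mem_filter, Finset.mem_univ, true_and]
        exact ⟨hβ, h0⟩
      rw [← hSeq] at hmem
      simp only [S, Finset.mem_filter, Finset.mem_univ, true_and] at hmem
      exact hmem.2
    · intro h0
      exact h β hβ h0
  -- the additive identity
  have key2 : ∀ s u : GaloisField 2 r, s ≠ 0 → u ≠ 0 → u ≠ s →
      tr (u ^ 2 / s) + tr u = tr s := by
    intro s u hs hu hus
    have hv : u + s ≠ 0 := by
      intro hc
      apply hus
      rw [add_eq_zero_iff_eq_neg, CharTwo.neg_eq] at hc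
      exact hc
    have hsum : u + (u + s) = s := by rw [← add_assoc, hadd, zero_add]
    have hA : u⁻¹ + (u + s)⁻¹ = s / (u * (u + s)) := by
      rw [inv_add_inv hu hv, hsum]
    have hAne : u⁻¹ + (u + s)⁻¹ ≠ 0 := by
      rw [hA]
      exact div_ne_zero hs (mul_ne_zero hu hv)
    have hAinv : (u⁻¹ + (u + s)⁻¹)⁻¹ = u * (u + s) / s := by
      rw [hA, inv_div]
    have h1 : tr (a * u⁻¹) = tr u := by
      rw [key u⁻¹ (inv_ne_zero hu), inv_inv]
    have h2 : tr (a * (u + s)⁻¹) = tr (u + s) := by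
      rw [key (u + s)⁻¹ (inv_ne_zero hv), inv_inv]
    have h3 := key _ hAne
    rw [hAinv, mul_add, map_add, h1, h2] at h3
    have hlhs : tr u + tr (u + s) = tr s := by
      rw [← map_add, hsum]
    have hrhs : u * (u + s) / s = u ^ 2 / s + u := by
      field_simp
    rw [hlhs, hrhs, map_add] at h3
    exact h3.symm
  -- find c with tr c ≠ 0
  obtain ⟨c, hc⟩ := Algebra.trace_surjective (ZMod 2) (GaloisField 2 r) 1
  have hcne : tr c ≠ 0 := by rw [htrdef, hc]; exact one_ne_zero
  have hc0 : c ≠ 0 := by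
    rintro rfl
    exact hcne (map_zero tr)
  -- card bound
  have hcard : 8 ≤ Fintype.card (GaloisField 2 r) := by
    have hcard' := GaloisField.card 2 r (by omega)
    rw [Nat.card_eq_fintype_card] at hcard'
    rw [hcard']
    calc (8 : ℕ) = 2 ^ 3 := rfl
      _ ≤ 2 ^ r := Nat.pow_le_pow_right (by norm_num) hr
  -- pick elements outside small finsets
  have pick : ∀ s : Finset (GaloisField 2 r), s.card < Fintype.card (GaloisField 2 r) →
      ∃ x : GaloisField 2 r, x ∉ s := by
    intro s hs
    have hpos : 0 < sᶜ.card := by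
      rw [Finset.card_compl]
      omega
    obtain ⟨x, hx⟩ := Finset.card_pos.mp hpos
    exact ⟨x, Finset.mem_compl.mp hx⟩
  obtain ⟨u1, hu1⟩ := pick {0, c} (by
    have h2 : ({0, c} : Finset (GaloisField 2 r)).card ≤ 2 :=
      (Finset.card_insert_le _ _).trans (by simp)
    omega)
  simp only [Finset.mem_insert, Finset.mem_singleton, not_or] at hu1
  obtain ⟨u2, hu2⟩ := pick {0, c, u1, u1 + c} (by
    have h1 : ({0, c, u1, u1 + c} : Finset (GaloisField 2 r)).card ≤ 4 := by
      apply (Finset.card_insert_le _ _).trans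
      have h2 : ({c, u1, u1 + c} : Finset (GaloisField 2 r)).card ≤ 3 := by
        apply (Finset.card_insert_le _ _).trans
        have h3 : ({u1, u1 + c} : Finset (GaloisField 2 r)).card ≤ 2 :=
          (Finset.card_insert_le _ _).trans (by simp)
        omega
      omega
    omega)
  simp only [Finset.mem_insert, Finset.mem_singleton, not_or] at hu2
  obtain ⟨hu20, hu2c, hu2u1, hu2u1c⟩ := hu2
  have hu120 : u1 + u2 ≠ 0 := by
    intro hc'
    rw [add_eq_zero_iff_eq_neg, CharTwo.neg_eq] at hc'
    exact hu2u1 hc'.symm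
  have hu12c : u1 + u2 ≠ c := by
    intro hc'
    apply hu2u1c
    have hx : u1 + (u1 + u2) = u1 + c := by rw [hc']
    rwa [← add_assoc, hadd, zero_add] at hx
  have e1 := key2 c u1 hc0 hu1.1 hu1.2
  have e2 := key2 c u2 hc0 hu20 hu2c
  have e3 := key2 c (u1 + u2) hc0 hu120 hu12c
  rw [CharTwo.add_sq, add_div, map_add, map_add] at e3
  have hfin : tr c + tr c = tr c := by
    nth_rewrite 1 [← e1]
    nth_rewrite 1 [← e2]
    rw [← e3]
    ring
  rw [zadd] at hfin
  exact hcne hfin.symm
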